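/- For C(x) = log Σ_{j=1}^n exp(x_j), the function x ↦ log(∂²_i C(x)) is 3-Lipschitz with respect to the ℓ∞ norm: |log(∂²_i C(x)/∂²_i C(x'))| ≤ 3·||x - x'||_∞. -/
import Mathlib


/-- C(x) = log Σ exp(x_j). -/
noncomputable def logSumExp (n : ℕ) (x : Fin n → ℝ) : ℝ :=
  Real.log (∑ j, Real.exp (x j))

/-- The i-th second partial derivative of C:
∂²_i C(x) = e^{x_i}·(Σ_{j≠i} e^{x_j})/(Σ_j e^{x_j})². -/
noncomputable def d2C (n : ℕ) (i : Fin n) (x : Fin n → ℝ) : ℝ :=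
  Real.exp (x i) * (∑ j ∈ Finset.univ.erase i, Real.exp (x j))
    / (∑ j, Real.exp (x j))^2

lemma erase_nonempty (n : ℕ) (hn : 2 ≤ n) (i : Fin n) :
    (Finset.univ.erase i).Nonempty := by
  rw [← Finset.card_pos, Finset.card_erase_of_mem (Finset.mem_univ i),
    Finset.card_univ, Fintype.card_fin]
  omega

lemma d2C_pos (n : ℕ) (hn : 2 ≤ n) (i : Fin n) (x : Fin n → ℝ) :
    0 < d2C n i x := by
  have h1 : 0 < ∑ j ∈ Finset.univ.erase i, Real.exp (x j) :=
    Finset.sum_pos (fun j _ => Real.exp_pos _) (erase_nonempty n hn i)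
  have h2 : 0 < ∑ j, Real.exp (x j) :=
    Finset.sum_pos (fun j _ => Real.exp_pos _) ⟨i, Finset.mem_univ i⟩
  exact div_pos (mul_pos (Real.exp_pos _) h1) (pow_pos h2 2)

lemma d2C_key (n : ℕ) (hn : 2 ≤ n) (i : Fin n) (x x' : Fin n → ℝ) :
    d2C n i x ≤ Real.exp (2 * ‖x - x'‖) * d2C n i x' := by
  set t := ‖x - x'‖ with ht_def
  have ht : 0 ≤ t := norm_nonneg _
  have hpt : ∀ j, Real.exp (x j) ≤ Real.exp t * Real.exp (x' j) := by
    intro j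
    rw [← Real.exp_add]
    apply Real.exp_le_exp.mpr
    have := norm_le_pi_norm (x - x') j
    simp only [Pi.sub_apply, Real.norm_eq_abs] at this
    have := abs_le.mp this
    linarith [this.2]
  set S := ∑ j, Real.exp (x j) with hS_def
  set S' := ∑ j, Real.exp (x' j) with hS'_def
  set Si := ∑ j ∈ Finset.univ.erase i, Real.exp (x j) with hSi_def
  set Si' := ∑ j ∈ Finset.univ.erase i, Real.exp (x' j) with hSi'_def
  have hSpos : 0 < S := Finset.sum_pos (fun j _ => Real.exp_pos _) ⟨i, Finset.mem_univ i⟩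
  have hS'pos : 0 < S' := Finset.sum_pos (fun j _ => Real.exp_pos _) ⟨i, Finset.mem_univ i⟩
  have hSipos : 0 < Si :=
    Finset.sum_pos (fun j _ => Real.exp_pos _) (erase_nonempty n hn i)
  have hSi'pos : 0 < Si' :=
    Finset.sum_pos (fun j _ => Real.exp_pos _) (erase_nonempty n hn i)
  have hSsplit : Real.exp (x i) + Si = S :=
    Finset.add_sum_erase _ (fun j => Real.exp (x j)) (Finset.mem_univ i)
  have hS'split : Real.exp (x' i) + Si' = S' :=
    Finset.add_sum_erase _ (fun j => Real.exp (x' j)) (Finset.mem_univ i)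
  have hSi_le : Si ≤ Real.exp t * Si' := by
    rw [Finset.mul_sum]
    exact Finset.sum_le_sum fun j _ => hpt j
  have hS'_le : S' ≤ Real.exp t * S := by
    rw [Finset.mul_sum]
    refine Finset.sum_le_sum fun j _ => ?_
    rw [← Real.exp_add]
    apply Real.exp_le_exp.mpr
    have := norm_le_pi_norm (x - x') j
    simp only [Pi.sub_apply, Real.norm_eq_abs] at this
    have := abs_le.mp this
    linarith [this.1]
  have het : (0:ℝ) < Real.exp t := Real.exp_pos _
  have hexpi := Real.exp_pos (x i)
  have hexpi' := Real.exp_pos (x' i)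
  -- main inequality on numerators/denominators
  have main : Real.exp (x i) * Si * S' ^ 2 ≤
      Real.exp t ^ 2 * (Real.exp (x' i) * Si' * S ^ 2) := by
    by_cases hcase : Real.exp (x i) * S' ≤ Real.exp (x' i) * S
    · calc Real.exp (x i) * Si * S' ^ 2
          = (Real.exp (x i) * S') * (Si * S') := by ring
        _ ≤ (Real.exp (x' i) * S) * ((Real.exp t * Si') * (Real.exp t * S)) := by
            refine mul_le_mul hcase ?_ ?_ ?_
            · exact mul_le_mul hSi_le hS'_le (le_of_lt hS'pos)
                (le_of_lt (mul_pos het hSi'pos))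
            · exact le_of_lt (mul_pos hSipos hS'pos)
            · exact le_of_lt (mul_pos hexpi' hSpos)
        _ = Real.exp t ^ 2 * (Real.exp (x' i) * Si' * S ^ 2) := by ring
    · push_neg at hcase
      have e1 : Si * S' = S * S' - Real.exp (x i) * S' := by
        rw [← hSsplit]; ring
      have e2 : Si' * S = S' * S - Real.exp (x' i) * S := by
        rw [← hS'split]; ring
      have hcase2 : Si * S' ≤ Si' * S := by
        rw [e1, e2]; nlinarith [hcase]
      calc Real.exp (x i) * Si * S' ^ 2
          = (Si * S') * (Real.exp (x i) * S') := by ring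
        _ ≤ (Si' * S) * ((Real.exp t * Real.exp (x' i)) * (Real.exp t * S)) := by
            refine mul_le_mul hcase2 ?_ ?_ ?_
            · exact mul_le_mul (hpt i) hS'_le (le_of_lt hS'pos)
                (le_of_lt (mul_pos het hexpi'))
            · exact le_of_lt (mul_pos hexpi hS'pos)
            · exact le_of_lt (mul_pos hSi'pos hSpos)
        _ = Real.exp t ^ 2 * (Real.exp (x' i) * Si' * S ^ 2) := by ring
  have h2t : Real.exp (2 * t) = Real.exp t ^ 2 := by
    rw [two_mul, Real.exp_add, sq]
  rw [d2C, d2C, ← hS_def, ← hS'_def, ← hSi_def, ← hSi'_def, h2t,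
    show Real.exp t ^ 2 * (Real.exp (x' i) * Si' / S' ^ 2)
      = Real.exp t ^ 2 * (Real.exp (x' i) * Si') / S' ^ 2 from by ring,
    div_le_div_iff₀ (pow_pos hSpos 2) (pow_pos hS'pos 2)]
  linear_combination main

/-- x ↦ log(∂²_i C(x)) is 3-Lipschitz in the ℓ∞ norm. -/
theorem log_d2C_lipschitz (n : ℕ) (hn : 2 ≤ n) (i : Fin n) (x x' : Fin n → ℝ) :
    |Real.log (d2C n i x / d2C n i x')| ≤ 3 * ‖x - x'‖ := by
  have ht : (0:ℝ) ≤ ‖x - x'‖ := norm_nonneg _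
  have hp : 0 < d2C n i x := d2C_pos n hn i x
  have hp' : 0 < d2C n i x' := d2C_pos n hn i x'
  have h1 := d2C_key n hn i x x'
  have h2 := d2C_key n hn i x' x
  rw [norm_sub_rev] at h2
  have hlog : Real.log (d2C n i x / d2C n i x') =
      Real.log (d2C n i x) - Real.log (d2C n i x') :=
    Real.log_div (ne_of_gt hp) (ne_of_gt hp')
  have l1 : Real.log (d2C n i x) ≤ 2 * ‖x - x'‖ + Real.log (d2C n i x') := by
    calc Real.log (d2C n i x) ≤ Real.log (Real.exp (2 * ‖x - x'‖) * d2C n i x') :=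
          Real.log_le_log hp h1
      _ = 2 * ‖x - x'‖ + Real.log (d2C n i x') := by
          rw [Real.log_mul (by positivity) (ne_of_gt hp'), Real.log_exp]
  have l2 : Real.log (d2C n i x') ≤ 2 * ‖x - x'‖ + Real.log (d2C n i x) := by
    calc Real.log (d2C n i x') ≤ Real.log (Real.exp (2 * ‖x - x'‖) * d2C n i x) :=
          Real.log_le_log hp' h2
      _ = 2 * ‖x - x'‖ + Real.log (d2C n i x) := by
          rw [Real.log_mul (by positivity) (ne_of_gt hp), Real.log_exp]
  rw [hlog, abs_le]
  constructor <;> linarith
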